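/- Let F be a finite field with q elements, m₁,…,m_n positive integers, and b₁,…,b_n ∈ F nonzero. Set d_j = gcd(m_j, q-1). If 1/d₁ + … + 1/d_n > 1, then the equation b₁X₁^{m₁} + … + b_nX_n^{m_n} = 0 has a nontrivial solution in Fⁿ, i.e., a solution other than (0,…,0). -/

import Mathlib

open Finset Pointwise

/-- **Kemperman–Scherk theorem**: if `0` has a unique representation as a sum `a + b`
with `a ∈ A`, `b ∈ B`, then `|A + B| ≥ |A| + |B| - 1`. -/
theorem scherk_aux {F : Type*} [AddCommGroup F] [Fintype F] [DecidableEq F] :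
    ∀ (B A : Finset F), 0 ∈ A → 0 ∈ B →
    (∀ a ∈ A, ∀ b ∈ B, a + b = 0 → a = 0 ∧ b = 0) →
    A.card + B.card ≤ (A + B).card + 1 := by
  intro B
  induction B using Finset.strongInduction with
  | _ B ih =>
    intro A hA hB huniq
    by_cases hcase : ∀ e ∈ A, e ≠ 0 → ∀ b ∈ B, e + b ∈ A
    · -- saturated case : A + B = A ∪ B and A ∩ B ⊆ {0}
      have hAB : A + B = A ∪ B := by
        apply Finset.Subset.antisymm
        · intro x hx
          obtain ⟨a, ha, c, hc, rfl⟩ := Finset.mem_add.1 hx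
          by_cases h0 : a = 0
          · subst h0; rw [zero_add]; exact Finset.mem_union_right _ hc
          · exact Finset.mem_union_left _ (hcase a ha h0 c hc)
        · intro x hx
          rcases Finset.mem_union.1 hx with h | h
          · exact Finset.mem_add.2 ⟨x, h, 0, hB, add_zero x⟩
          · exact Finset.mem_add.2 ⟨0, hA, x, h, zero_add x⟩
      have hint : A ∩ B ⊆ {0} := by
        intro x hx
        have hxA := (Finset.mem_inter.1 hx).1
        have hxB := (Finset.mem_inter.1 hx).2
        rw [Finset.mem_singleton]
        by_contra hx0
        have key : ∀ k : ℕ, (k + 1) • x ∈ A ∧ (k + 1) • x ≠ 0 := by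
          intro k
          induction k with
          | zero => simpa using ⟨hxA, hx0⟩
          | succ k ihk =>
            have h1 : (k + 1 + 1) • x = (k + 1) • x + x := succ_nsmul x (k + 1)
            constructor
            · rw [h1]; exact hcase _ ihk.1 ihk.2 x hxB
            · rw [h1]; intro h
              exact ihk.2 (huniq _ ihk.1 x hxB h).1
        obtain ⟨k, hk⟩ : ∃ k, Fintype.card F = k + 1 :=
          Nat.exists_eq_succ_of_ne_zero Fintype.card_ne_zero
        have hkey := key k
        rw [← hk] at hkey
        exact hkey.2 (card_nsmul_eq_zero)
      have h1 : (A ∩ B).card ≤ 1 := by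
        calc (A ∩ B).card ≤ ({0} : Finset F).card := Finset.card_le_card hint
          _ = 1 := Finset.card_singleton 0
      calc A.card + B.card = (A ∪ B).card + (A ∩ B).card :=
            (Finset.card_union_add_card_inter A B).symm
        _ ≤ (A ∪ B).card + 1 := by omega
        _ = (A + B).card + 1 := by rw [hAB]
    · -- transform case
      push_neg at hcase
      obtain ⟨e, heA, he0, b₀, hb₀, hb₀n⟩ := hcase
      set B' := B.filter (fun x => x + e ∈ A) with hB'def
      set D := B.filter (fun x => ¬ (x + e ∈ A)) with hDdef
      set A' := A ∪ D.image (fun x => x + e) with hA'def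
      have hdisj : Disjoint A (D.image (fun x => x + e)) := by
        rw [Finset.disjoint_right]
        intro y hy hyA
        obtain ⟨d, hd, rfl⟩ := Finset.mem_image.1 hy
        exact (Finset.mem_filter.1 hd).2 hyA
      have hcardA' : A'.card = A.card + D.card := by
        rw [hA'def, Finset.card_union_of_disjoint hdisj,
          Finset.card_image_of_injective _ (add_left_injective e)]
      have hcardB : B'.card + D.card = B.card :=
        Finset.card_filter_add_card_filter_not _
      have hssub : B' ⊂ B := by
        refine Finset.ssubset_iff_of_subset (Finset.filter_subset _ _) |>.2 ⟨b₀, hb₀, ?_⟩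
        intro hmem
        have := (Finset.mem_filter.1 hmem).2
        rw [add_comm] at this
        exact hb₀n this
      have h0A' : (0 : F) ∈ A' := Finset.mem_union_left _ hA
      have h0B' : (0 : F) ∈ B' := by
        rw [hB'def, Finset.mem_filter]
        exact ⟨hB, by rwa [zero_add]⟩
      have huniq' : ∀ a ∈ A', ∀ c ∈ B', a + c = 0 → a = 0 ∧ c = 0 := by
        intro a ha c hc habc
        have hcB := (Finset.mem_filter.1 hc).1
        have hceA := (Finset.mem_filter.1 hc).2
        rcases Finset.mem_union.1 ha with h | h
        · exact huniq a h c hcB habc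
        · obtain ⟨d, hd, rfl⟩ := Finset.mem_image.1 h
          have hdB := (Finset.mem_filter.1 hd).1
          have h2 : (c + e) + d = 0 := by rw [← habc]; abel
          have h3 := huniq (c + e) hceA d hdB h2
          have h4 : e + c = 0 := by
            have := h3.1
            rw [add_comm] at this
            exact this
          exact absurd (huniq e heA c hcB h4).1 he0
      have hsub : A' + B' ⊆ A + B := by
        intro x hx
        obtain ⟨a, ha, c, hc, rfl⟩ := Finset.mem_add.1 hx
        have hcB := (Finset.mem_filter.1 hc).1
        have hceA := (Finset.mem_filter.1 hc).2
        rcases Finset.mem_union.1 ha with h | h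
        · exact Finset.mem_add.2 ⟨a, h, c, hcB, rfl⟩
        · obtain ⟨d, hd, rfl⟩ := Finset.mem_image.1 h
          exact Finset.mem_add.2 ⟨c + e, hceA, d, (Finset.mem_filter.1 hd).1, by abel⟩
      have hihB := ih B' hssub A' h0A' h0B' huniq'
      calc A.card + B.card = A'.card + B'.card := by omega
        _ ≤ (A' + B').card + 1 := hihB
        _ ≤ (A + B).card + 1 := by
            exact Nat.add_le_add_right (Finset.card_le_card hsub) 1

/-- Membership in a pointwise sum of finsets. -/
theorem mem_finsetSum {F : Type*} [AddCommMonoid F] [DecidableEq F]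
    {ι : Type*} [DecidableEq ι] (s : Finset ι) (A : ι → Finset F) (x : F) :
    x ∈ ∑ j ∈ s, A j ↔ ∃ f : ι → F, (∀ j ∈ s, f j ∈ A j) ∧ ∑ j ∈ s, f j = x := by
  classical
  induction s using Finset.induction generalizing x with
  | empty =>
    simp only [Finset.sum_empty]
    constructor
    · intro hx
      rw [Finset.mem_zero] at hx
      exact ⟨fun _ => 0, by simp, by simp [hx]⟩
    · rintro ⟨f, -, rfl⟩
      simp [Finset.mem_zero]
  | insert _ _ hi ih =>
    rename_i i s
    rw [Finset.sum_insert hi, Finset.mem_add]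
    constructor
    · rintro ⟨a, ha, p, hp, rfl⟩
      obtain ⟨f, hf, hfs⟩ := (ih p).1 hp
      refine ⟨Function.update f i a, ?_, ?_⟩
      · intro j hj
        rcases Finset.mem_insert.1 hj with rfl | hj2
        · simp [Function.update_self, ha]
        · have hji : j ≠ i := by rintro rfl; exact hi hj2
          simp [Function.update_of_ne hji, hf j hj2]
      · rw [Finset.sum_insert hi, Function.update_self]
        congr 1
        rw [← hfs]
        apply Finset.sum_congr rfl
        intro j hj
        exact Function.update_of_ne (by rintro rfl; exact hi hj) _ _
    · rintro ⟨f, hf, rfl⟩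
      rw [Finset.sum_insert hi]
      exact ⟨f i, hf i (Finset.mem_insert_self i s), ∑ j ∈ s, f j,
        (ih _).2 ⟨f, fun j hj => hf j (Finset.mem_insert_of_mem hj), rfl⟩, rfl⟩

/-- Iterated Scherk bound. -/
theorem scherk_iter {F : Type*} [AddCommGroup F] [Fintype F] [DecidableEq F]
    {ι : Type*} [DecidableEq ι] (s : Finset ι) (A : ι → Finset F)
    (h0 : ∀ j ∈ s, (0 : F) ∈ A j)
    (huniq : ∀ f : ι → F, (∀ j ∈ s, f j ∈ A j) → ∑ j ∈ s, f j = 0 → ∀ j ∈ s, f j = 0) :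
    (∑ j ∈ s, (A j).card) + 1 ≤ (∑ j ∈ s, A j).card + s.card := by
  classical
  induction s using Finset.induction with
  | empty => simp
  | insert _ _ hi ih =>
    rename_i i s
    have h0s : ∀ j ∈ s, (0 : F) ∈ A j := fun j hj => h0 j (Finset.mem_insert_of_mem hj)
    have h0i : (0 : F) ∈ A i := h0 i (Finset.mem_insert_self i s)
    have h0P : (0 : F) ∈ ∑ j ∈ s, A j :=
      (mem_finsetSum s A 0).2 ⟨fun _ => 0, fun j hj => h0s j hj, by simp⟩
    have huniqs : ∀ f : ι → F, (∀ j ∈ s, f j ∈ A j) → ∑ j ∈ s, f j = 0 → ∀ j ∈ s, f j = 0 := by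
      intro f hf hsum j hj
      have hf' : ∀ k ∈ insert i s, Function.update f i 0 k ∈ A k := by
        intro k hk
        rcases Finset.mem_insert.1 hk with rfl | hk2
        · simpa [Function.update_self] using h0i
        · have : k ≠ i := by rintro rfl; exact hi hk2
          simpa [Function.update_of_ne this] using hf k hk2
      have hsum' : ∑ k ∈ insert i s, Function.update f i 0 k = 0 := by
        rw [Finset.sum_insert hi, Function.update_self, zero_add]
        rw [← hsum]
        exact Finset.sum_congr rfl fun k hk => Function.update_of_ne (by rintro rfl; exact hi hk) _ _
      have := huniq _ hf' hsum' j (Finset.mem_insert_of_mem hj)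
      rwa [Function.update_of_ne (by rintro rfl; exact hi hj)] at this
    have ihs := ih h0s huniqs
    -- pair uniqueness for (P_s, A i)
    have hpair : ∀ a ∈ (∑ j ∈ s, A j), ∀ c ∈ A i, a + c = 0 → a = 0 ∧ c = 0 := by
      intro a ha c hc hac
      obtain ⟨f, hf, hfs⟩ := (mem_finsetSum s A a).1 ha
      set g := Function.update f i c with hg
      have hg' : ∀ k ∈ insert i s, g k ∈ A k := by
        intro k hk
        rcases Finset.mem_insert.1 hk with rfl | hk2
        · simpa [hg, Function.update_self] using hc
        · have : k ≠ i := by rintro rfl; exact hi hk2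
          simpa [hg, Function.update_of_ne this] using hf k hk2
      have hgsum : ∑ k ∈ insert i s, g k = 0 := by
        rw [Finset.sum_insert hi]
        have : ∑ k ∈ s, g k = a := by
          rw [← hfs]
          exact Finset.sum_congr rfl fun k hk =>
            Function.update_of_ne (by rintro rfl; exact hi hk) _ _
        rw [this, hg, Function.update_self, add_comm]
        exact hac
      have hall := huniq g hg' hgsum
      constructor
      · rw [← hfs]
        apply Finset.sum_eq_zero
        intro k hk
        have hki : k ≠ i := by rintro rfl; exact hi hk
        have := hall k (Finset.mem_insert_of_mem hk)
        rwa [hg, Function.update_of_ne hki] at this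
      · have := hall i (Finset.mem_insert_self i s)
        rwa [hg, Function.update_self] at this
    have hscherk := scherk_aux (A i) (∑ j ∈ s, A j) h0P h0i hpair
    rw [Finset.sum_insert hi, Finset.sum_insert hi, Finset.card_insert_of_notMem hi]
    have hcomm : A i + ∑ j ∈ s, A j = (∑ j ∈ s, A j) + A i := add_comm _ _
    rw [hcomm]
    omega

/-- Homogeneous diagonal equations have nontrivial solutions under the Morlaye–Joly condition. -/
theorem stmt_8 (F : Type*) [Field F] [Fintype F] (q n : ℕ) (hq : Fintype.card F = q)
    (m : Fin n → ℕ) (hm : ∀ j, 0 < m j) (b : Fin n → F) (hb : ∀ j, b j ≠ 0)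
    (hineq : (1 : ℚ) < ∑ j, (1 : ℚ) / Nat.gcd (m j) (q - 1)) :
    ∃ x : Fin n → F, x ≠ 0 ∧ ∑ j, b j * x j ^ m j = 0 := by
  classical
  by_contra hcon
  push_neg at hcon
  have htriv : ∀ x : Fin n → F, ∑ j, b j * x j ^ m j = 0 → x = 0 := by
    intro x hx
    by_contra hx0
    exact (hcon x hx0) hx
  set d : Fin n → ℕ := fun j => Nat.gcd (m j) (q - 1) with hd
  have hq2 : 2 ≤ q := by rw [← hq]; exact Fintype.one_lt_card
  have hdpos : ∀ j, 0 < d j := fun j => Nat.gcd_pos_of_pos_left _ (hm j)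
  set f : Fin n → F → F := fun j x => b j * x ^ m j with hf
  set S : Finset F := Finset.univ.erase 0 with hS
  have hScard : S.card = q - 1 := by
    rw [hS, Finset.card_erase_of_mem (Finset.mem_univ 0), Finset.card_univ, hq]
  set A : Fin n → Finset F := fun j => insert 0 (S.image (f j)) with hA
  -- fibers of f j on S have size at most d j
  have hfiber : ∀ j, q - 1 ≤ d j * (S.image (f j)).card := by
    intro j
    rw [← hScard]
    apply Finset.card_le_mul_card_image
    intro z hz
    obtain ⟨y, hy, rfl⟩ := Finset.mem_image.1 hz
    have hy0 : y ≠ 0 := Finset.ne_of_mem_erase hy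
    -- elements of the fiber satisfy x ^ d j = y ^ d j
    have hsubset : S.filter (fun x => f j x = f j y) ⊆
        (Polynomial.nthRoots (d j) (y ^ d j)).toFinset := by
      intro x hx
      have hx0 : x ≠ 0 := Finset.ne_of_mem_erase (Finset.mem_filter.1 hx).1
      have hfx : f j x = f j y := (Finset.mem_filter.1 hx).2
      have hpow : x ^ m j = y ^ m j := by
        have := hfx
        rw [hf] at this
        exact mul_left_cancel₀ (hb j) this
      -- deduce x ^ d j = y ^ d j
      have hxd : x ^ d j = y ^ d j := by
        have hyinv : y ≠ 0 := hy0
        set t : F := x * y⁻¹ with ht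
        have ht0 : t ≠ 0 := mul_ne_zero hx0 (inv_ne_zero hyinv)
        have htm : t ^ m j = 1 := by
          rw [ht, mul_pow, hpow, inv_pow, mul_inv_cancel₀ (pow_ne_zero _ hyinv)]
        have htq : t ^ (q - 1) = 1 := by
          rw [← hq]
          exact FiniteField.pow_card_sub_one_eq_one t ht0
        have hdvd1 : orderOf t ∣ m j := orderOf_dvd_of_pow_eq_one htm
        have hdvd2 : orderOf t ∣ (q - 1) := orderOf_dvd_of_pow_eq_one htq
        have htd : t ^ d j = 1 :=
          orderOf_dvd_iff_pow_eq_one.1 (Nat.dvd_gcd hdvd1 hdvd2)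
        have hxty : x = t * y := by
          rw [ht, mul_assoc, inv_mul_cancel₀ hyinv, mul_one]
        rw [hxty, mul_pow, htd, one_mul]
      rw [Multiset.mem_toFinset, Polynomial.mem_nthRoots (hdpos j)]
      exact hxd
    calc (S.filter (fun x => f j x = f j y)).card
        ≤ (Polynomial.nthRoots (d j) (y ^ d j)).toFinset.card :=
          Finset.card_le_card hsubset
      _ ≤ Multiset.card (Polynomial.nthRoots (d j) (y ^ d j)) :=
          Multiset.toFinset_card_le _
      _ ≤ d j := Polynomial.card_nthRoots _ _
  have h0notim : ∀ j, (0 : F) ∉ S.image (f j) := by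
    intro j hmem
    obtain ⟨y, hy, hval⟩ := Finset.mem_image.1 hmem
    have hy0 : y ≠ 0 := Finset.ne_of_mem_erase hy
    rw [hf] at hval
    exact (mul_ne_zero (hb j) (pow_ne_zero _ hy0)) hval
  have hAcard : ∀ j, (A j).card = (S.image (f j)).card + 1 := by
    intro j
    rw [hA, Finset.card_insert_of_notMem (h0notim j)]
  -- numeric: ∑ (S.image (f j)).card ≥ q
  set k : Fin n → ℕ := fun j => (S.image (f j)).card with hk
  have hkq : q ≤ ∑ j, k j := by
    have h1 : ((q : ℚ) - 1) < ∑ j, (k j : ℚ) := by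
      have hstep : ∀ j, (1 : ℚ) / (d j : ℚ) ≤ (k j : ℚ) / ((q : ℚ) - 1) := by
        intro j
        have hdq : (0 : ℚ) < (d j : ℚ) := by exact_mod_cast hdpos j
        have hq1 : (0 : ℚ) < (q : ℚ) - 1 := by
          have : (2 : ℚ) ≤ (q : ℚ) := by exact_mod_cast hq2
          linarith
        rw [div_le_div_iff₀ hdq hq1, one_mul]
        have := hfiber j
        have hcast : ((q - 1 : ℕ) : ℚ) ≤ ((d j * k j : ℕ) : ℚ) := by exact_mod_cast this
        rw [Nat.cast_sub (by omega), Nat.cast_mul] at hcast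
        calc (q : ℚ) - 1 ≤ (d j : ℚ) * (k j : ℚ) := by exact_mod_cast hcast
          _ = (k j : ℚ) * (d j : ℚ) := mul_comm _ _
      have hsum : (1 : ℚ) < ∑ j, (k j : ℚ) / ((q : ℚ) - 1) := by
        calc (1 : ℚ) < ∑ j, (1 : ℚ) / (d j : ℚ) := hineq
          _ ≤ ∑ j, (k j : ℚ) / ((q : ℚ) - 1) := Finset.sum_le_sum fun j _ => hstep j
      have hq1 : (0 : ℚ) < (q : ℚ) - 1 := by
        have : (2 : ℚ) ≤ (q : ℚ) := by exact_mod_cast hq2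
        linarith
      rw [← Finset.sum_div] at hsum
      rw [lt_div_iff₀ hq1, one_mul] at hsum
      linarith
    have h2 : ((q : ℚ) - 1) < ((∑ j, k j : ℕ) : ℚ) := by
      rw [Nat.cast_sum]
      exact h1
    have h3 : (q : ℚ) < ((∑ j, k j : ℕ) : ℚ) + 1 := by linarith
    exact_mod_cast Nat.lt_add_one_iff.1 (by exact_mod_cast h3)
  -- apply iterated Scherk
  have h0A : ∀ j ∈ Finset.univ, (0 : F) ∈ A j := fun j _ => Finset.mem_insert_self 0 _
  have hAim : ∀ j, ∀ z ∈ A j, ∃ x : F, f j x = z := by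
    intro j z hz
    rw [hA, Finset.mem_insert] at hz
    rcases hz with rfl | hz
    · exact ⟨0, by rw [hf]; simp [zero_pow (hm j).ne']⟩
    · obtain ⟨y, _, hy⟩ := Finset.mem_image.1 hz
      exact ⟨y, hy⟩
  have huniq : ∀ g : Fin n → F, (∀ j ∈ Finset.univ, g j ∈ A j) →
      ∑ j ∈ Finset.univ, g j = 0 → ∀ j ∈ Finset.univ, g j = 0 := by
    intro g hg hgsum j _
    choose x hx using fun j => hAim j (g j) (hg j (Finset.mem_univ j))
    have hsum0 : ∑ j, b j * x j ^ m j = 0 := by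
      calc ∑ j, b j * x j ^ m j = ∑ j, g j := Finset.sum_congr rfl fun j _ => hx j
        _ = 0 := hgsum
    have hx0 := htriv x hsum0
    rw [← hx j, hf]
    have : x j = 0 := congrFun hx0 j
    rw [this]
    simp [zero_pow (hm j).ne']
  have hiter := scherk_iter Finset.univ A h0A huniq
  have hcardle : (∑ j ∈ Finset.univ, A j).card ≤ q := by
    rw [← hq, ← Finset.card_univ]
    exact Finset.card_le_univ _
  have hsumcard : ∑ j ∈ Finset.univ, (A j).card = (∑ j, k j) + n := by
    rw [Finset.sum_congr rfl fun j _ => hAcard j, Finset.sum_add_distrib]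
    simp [hk]
  rw [hsumcard, Finset.card_univ, Fintype.card_fin] at hiter
  omega
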